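/- Let (a_s)_{s≥1} be a sequence of non-negative reals with ∑_{s=1}^∞ a_s^r < ∞, and let k be an integer with 1 ≤ k < r. Then ∑_{s=1}^n a_s^k = o(n^{1 - k/r}) as n → ∞, i.e., (∑_{s=1}^n a_s^k)/n^{1-k/r} → 0. -/

import Mathlib

theorem stmt_2 (a : ℕ → ℝ) (ha : ∀ s, 0 ≤ a s) (r k : ℕ) (hk : 1 ≤ k) (hkr : k < r)
    (hsum : Summable fun s => a s ^ r) :
    Filter.Tendsto
      (fun n : ℕ => (∑ s ∈ Finset.range n, a s ^ k) / (n : ℝ) ^ ((1 : ℝ) - (k : ℝ) / (r : ℝ)))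
      Filter.atTop (nhds 0) := by
  have hk0 : (0:ℝ) < k := by exact_mod_cast hk
  have hr0 : (0:ℝ) < r := by exact_mod_cast (hk.trans hkr.le)
  set α : ℝ := 1 - (k:ℝ)/(r:ℝ) with hαdef
  have hα0 : 0 < α := by
    rw [hαdef, sub_pos, div_lt_one hr0]; exact_mod_cast hkr
  have hkr0 : 0 ≤ (k:ℝ)/(r:ℝ) := by positivity
  -- Hölder inequality on finite sets
  have holder : ∀ F : Finset ℕ,
      ∑ s ∈ F, a s ^ k ≤ (F.card : ℝ) ^ α * (∑ s ∈ F, a s ^ r) ^ ((k:ℝ)/(r:ℝ)) := by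
    intro F
    have hp : (1:ℝ) ≤ (r:ℝ)/(k:ℝ) := by
      rw [le_div_iff₀ hk0, one_mul]; exact_mod_cast hkr.le
    have H := Real.inner_le_weight_mul_Lp_of_nonneg F hp (fun _ => 1) (fun s => a s ^ k)
      (fun _ => zero_le_one) (fun s => pow_nonneg (ha s) k)
    have hinv : ((r:ℝ)/(k:ℝ))⁻¹ = (k:ℝ)/(r:ℝ) := by
      rw [inv_div]
    have hpow : ∀ s, (a s ^ k) ^ ((r:ℝ)/(k:ℝ)) = a s ^ r := by
      intro s
      rw [← Real.rpow_natCast (a s) k, ← Real.rpow_mul (ha s)]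
      rw [mul_comm, div_mul_cancel₀ _ (ne_of_gt hk0), Real.rpow_natCast]
    simp only [one_mul, Finset.sum_const, nsmul_eq_mul, mul_one, hinv, hpow] at H
    calc ∑ s ∈ F, a s ^ k ≤ ((F.card : ℝ)) ^ (1 - (k:ℝ)/(r:ℝ)) *
          (∑ s ∈ F, a s ^ r) ^ ((k:ℝ)/(r:ℝ)) := H
      _ = (F.card : ℝ) ^ α * (∑ s ∈ F, a s ^ r) ^ ((k:ℝ)/(r:ℝ)) := by rw [hαdef]
  rw [Metric.tendsto_atTop]
  intro ε hε
  -- choose N so that the tail of ∑ a^r is small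
  set δ : ℝ := (ε/2) ^ ((r:ℝ)/(k:ℝ)) with hδdef
  have hδ0 : 0 < δ := Real.rpow_pos_of_pos (by linarith) _
  have htail : Filter.Tendsto (fun N => ∑' s, a (s + N) ^ r) Filter.atTop (nhds 0) :=
    tendsto_sum_nat_add (fun s => a s ^ r)
  obtain ⟨N, hN⟩ := (Metric.tendsto_atTop.1 htail δ hδ0) 
  have hNtail : ∑' s, a (s + N) ^ r < δ := by
    have := hN N le_rfl
    rw [Real.dist_eq, sub_zero] at this
    exact lt_of_abs_lt this
  have hsumtail : Summable fun s => a (s + N) ^ r := by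
    exact (summable_nat_add_iff N).2 hsum
  have hT0 : 0 ≤ ∑' s, a (s + N) ^ r :=
    tsum_nonneg fun s => pow_nonneg (ha _) r
  set B : ℝ := ∑ s ∈ Finset.range N, a s ^ k with hBdef
  -- B / n^α → 0
  have hBten : Filter.Tendsto (fun n : ℕ => B / (n:ℝ) ^ α) Filter.atTop (nhds 0) := by
    apply Filter.Tendsto.div_atTop (tendsto_const_nhds)
    exact (tendsto_rpow_atTop hα0).comp tendsto_natCast_atTop_atTop
  obtain ⟨N2, hN2⟩ := (Metric.tendsto_atTop.1 hBten (ε/2) (by linarith))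
  refine ⟨max (N + 1) (max N2 1), fun n hn => ?_⟩
  have hnN : N ≤ n := le_trans (Nat.le_succ N) (le_trans (le_max_left _ _) hn)
  have hn1 : 1 ≤ n := le_trans (le_trans (le_max_right _ _) (le_max_right _ _)) hn
  have hnN2 : N2 ≤ n := le_trans (le_trans (le_max_left _ _) (le_max_right _ _)) hn
  have hnpos : (0:ℝ) < (n:ℝ) ^ α :=
    Real.rpow_pos_of_pos (by exact_mod_cast hn1) _
  -- split the sum
  have hsplit : ∑ s ∈ Finset.range n, a s ^ k = B + ∑ s ∈ Finset.Ico N n, a s ^ k := by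
    rw [hBdef, Finset.range_eq_Ico, Finset.range_eq_Ico]
    exact (Finset.sum_Ico_consecutive (fun s => a s ^ k) (Nat.zero_le N) hnN).symm
  -- bound the Ico part
  have hIco_r : ∑ s ∈ Finset.Ico N n, a s ^ r ≤ ∑' s, a (s + N) ^ r := by
    rw [Finset.sum_Ico_eq_sum_range]
    have : ∀ j, a (N + j) ^ r = a (j + N) ^ r := fun j => by rw [Nat.add_comm]
    simp only [this]
    exact Summable.sum_le_tsum _ (fun i _ => pow_nonneg (ha _) r) hsumtail
  have hIco : ∑ s ∈ Finset.Ico N n, a s ^ k ≤ (n:ℝ) ^ α * (ε/2) := by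
    calc ∑ s ∈ Finset.Ico N n, a s ^ k
        ≤ ((Finset.Ico N n).card : ℝ) ^ α * (∑ s ∈ Finset.Ico N n, a s ^ r) ^ ((k:ℝ)/(r:ℝ)) :=
          holder _
      _ ≤ (n:ℝ) ^ α * δ ^ ((k:ℝ)/(r:ℝ)) := by
          apply mul_le_mul
          · apply Real.rpow_le_rpow (Nat.cast_nonneg _) _ hα0.le
            rw [Nat.card_Ico]
            exact_mod_cast Nat.sub_le n N
          · apply Real.rpow_le_rpow (Finset.sum_nonneg fun s _ => pow_nonneg (ha s) r)
              (le_trans hIco_r hNtail.le) hkr0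
          · exact Real.rpow_nonneg (Finset.sum_nonneg fun s _ => pow_nonneg (ha s) r) _
          · exact hnpos.le
      _ = (n:ℝ) ^ α * (ε/2) := by
          rw [hδdef, ← Real.rpow_mul (by linarith : (0:ℝ) ≤ ε/2)]
          rw [div_mul_div_comm, mul_comm (r:ℝ) (k:ℝ), div_self (by positivity), Real.rpow_one]
  -- conclude
  have hnum0 : 0 ≤ ∑ s ∈ Finset.range n, a s ^ k :=
    Finset.sum_nonneg fun s _ => pow_nonneg (ha s) k
  rw [Real.dist_eq, sub_zero, abs_of_nonneg (div_nonneg hnum0 hnpos.le)]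
  have hB2 : B / (n:ℝ) ^ α < ε/2 := by
    have := hN2 n hnN2
    rw [Real.dist_eq, sub_zero] at this
    exact lt_of_abs_lt this
  calc (∑ s ∈ Finset.range n, a s ^ k) / (n:ℝ) ^ α
      = B / (n:ℝ) ^ α + (∑ s ∈ Finset.Ico N n, a s ^ k) / (n:ℝ) ^ α := by
        rw [hsplit, add_div]
    _ ≤ B / (n:ℝ) ^ α + ((n:ℝ) ^ α * (ε/2)) / (n:ℝ) ^ α := by
        gcongr
    _ = B / (n:ℝ) ^ α + ε/2 := by
        rw [mul_comm, mul_div_assoc, div_self hnpos.ne', mul_one]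
    _ < ε := by linarith
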